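/- Change of variables for generalized analytic functions: let Z : T → D be a holomorphic bijection between open subsets of ℂ with nonvanishing derivative, and suppose ψ satisfies ∂_z̄ ψ = u·conj(ψ) on D. Define u_*(τ) = u(Z(τ))·|Z'(τ)| and ψ_*(τ) = ψ(Z(τ))·√(Z'(τ)) (for some continuous branch of the square root). Then ∂_τ̄ ψ_* = u_*·conj(ψ_*) on T. -/

import Mathlib

open Complex ComplexConjugate

/-- Wirtinger derivative ∂_z̄ = (∂_x + i ∂_y)/2. -/
noncomputable def dzbar (f : ℂ → ℂ) (z : ℂ) : ℂ :=
  (fderiv ℝ f z 1 + Complex.I * fderiv ℝ f z Complex.I) / 2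

lemma fderiv_real_apply_of_complex {f : ℂ → ℂ} {τ : ℂ} (h : DifferentiableAt ℂ f τ) (v : ℂ) :
    fderiv ℝ f τ v = deriv f τ * v := by
  rw [(h.hasFDerivAt.restrictScalars ℝ).fderiv, ContinuousLinearMap.coe_restrictScalars']
  have hv : v = v • (1:ℂ) := by simp
  rw [hv, map_smul, fderiv_apply_one_eq_deriv, smul_eq_mul, smul_eq_mul]
  ring

lemma dzbar_of_holomorphic {f : ℂ → ℂ} {τ : ℂ} (h : DifferentiableAt ℂ f τ) :
    dzbar f τ = 0 := by
  simp only [dzbar, fderiv_real_apply_of_complex h]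
  linear_combination (deriv f τ / 2) * Complex.I_sq

lemma dzbar_mul {f g : ℂ → ℂ} {τ : ℂ} (hf : DifferentiableAt ℝ f τ)
    (hg : DifferentiableAt ℝ g τ) :
    dzbar (fun σ => f σ * g σ) τ = f τ * dzbar g τ + g τ * dzbar f τ := by
  simp only [dzbar, fderiv_fun_mul hf hg, ContinuousLinearMap.add_apply,
    ContinuousLinearMap.smul_apply, smul_eq_mul]
  ring

lemma real_linear_apply (L : ℂ →L[ℝ] ℂ) (v : ℂ) :
    L v = (v.re : ℂ) * L 1 + (v.im : ℂ) * L Complex.I := by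
  conv_lhs => rw [← Complex.re_add_im v]
  have h1 : (v.re : ℂ) + (v.im : ℂ) * Complex.I
      = (v.re : ℝ) • (1:ℂ) + (v.im : ℝ) • Complex.I := by
    simp [Complex.real_smul]
  rw [h1, map_add, map_smul, map_smul]
  simp [Complex.real_smul]

lemma dzbar_comp_holomorphic {ψ Z : ℂ → ℂ} {τ : ℂ} (hZ : DifferentiableAt ℂ Z τ)
    (hψ : DifferentiableAt ℝ ψ (Z τ)) :
    dzbar (fun σ => ψ (Z σ)) τ = conj (deriv Z τ) * dzbar ψ (Z τ) := by
  have hc : fderiv ℝ (fun σ => ψ (Z σ)) τ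
      = (fderiv ℝ ψ (Z τ)).comp (fderiv ℝ Z τ) := fderiv_comp τ hψ (hZ.restrictScalars ℝ)
  set L := fderiv ℝ ψ (Z τ)
  set c := deriv Z τ
  have hconj : conj c = (c.re : ℂ) - (c.im : ℂ) * Complex.I := by
    simp [Complex.ext_iff]
  simp only [dzbar, hc, ContinuousLinearMap.comp_apply,
    fderiv_real_apply_of_complex hZ, mul_one]
  rw [real_linear_apply L c, real_linear_apply L (c * Complex.I), hconj]
  simp only [Complex.mul_I_re, Complex.mul_I_im, Complex.ofReal_neg]
  linear_combination ((c.im : ℂ) * L Complex.I / 2) * Complex.I_sq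

/-- holomorphic change of variables for generalized analytic
functions. -/
theorem change_of_variables_generalized_analytic
    (T D : Set ℂ) (hT : IsOpen T) (hD : IsOpen D)
    (Z : ℂ → ℂ) (hZhol : DifferentiableOn ℂ Z T)
    (hZbij : Set.BijOn Z T D)
    (hZ' : ∀ τ ∈ T, deriv Z τ ≠ 0)
    (s : ℂ → ℂ) (hs : ContinuousOn s T)
    (hssq : ∀ τ ∈ T, s τ ^ 2 = deriv Z τ)
    (u ψ : ℂ → ℂ) (hψC : ContDiffOn ℝ 1 ψ D)
    (hψ : ∀ z ∈ D, dzbar ψ z = u z * conj (ψ z)) :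
    ∀ τ ∈ T, dzbar (fun σ => ψ (Z σ) * s σ) τ =
      (u (Z τ) * ((‖deriv Z τ‖ : ℝ) : ℂ)) * conj (ψ (Z τ) * s τ) := by
  intro τ hτ
  have hZan : AnalyticOnNhd ℂ Z T := hZhol.analyticOnNhd hT
  have hdZ : AnalyticOnNhd ℂ (deriv Z) T := hZan.deriv
  have hdZc : ContinuousOn (deriv Z) T := hdZ.continuousOn
  have hZat : DifferentiableAt ℂ Z τ := hZhol.differentiableAt (hT.mem_nhds hτ)
  set w := s τ with hw
  set c := deriv Z τ with hcdef
  have hw2 : w ^ 2 = c := hssq τ hτ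
  have hc0 : c ≠ 0 := hZ' τ hτ
  have hw0 : w ≠ 0 := by
    intro h
    exact hc0 (by rw [← hw2, h]; ring)
  set F : ℂ → ℂ := fun σ => deriv Z σ / w ^ 2 with hF
  have hFτ : F τ = 1 := by
    simp only [hF, ← hcdef, hw2]
    exact div_self hc0
  have hFcont : ContinuousOn F T := hdZc.div_const _
  have hWopen : IsOpen (T ∩ F ⁻¹' Metric.ball 1 1) :=
    hFcont.isOpen_inter_preimage hT Metric.isOpen_ball
  have hτW : τ ∈ T ∩ F ⁻¹' Metric.ball 1 1 := by
    refine ⟨hτ, ?_⟩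
    simp [hFτ]
  obtain ⟨r, hr0, hball⟩ := Metric.isOpen_iff.mp hWopen τ hτW
  have hsubT : Metric.ball τ r ⊆ T := fun σ hσ => (hball hσ).1
  have hFmem : ∀ σ ∈ Metric.ball τ r, F σ ∈ Metric.ball (1:ℂ) 1 := fun σ hσ => (hball hσ).2
  have hFne : ∀ σ ∈ Metric.ball τ r, F σ ≠ 0 := by
    intro σ hσ h0
    have := hFmem σ hσ
    rw [h0] at this
    simp [Complex.dist_eq] at this
  have hFslit : ∀ σ ∈ Metric.ball τ r, F σ ∈ Complex.slitPlane := by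
    intro σ hσ
    have h1 : dist (F σ) 1 < 1 := hFmem σ hσ
    rw [Complex.dist_eq] at h1
    have h2 : |(F σ - 1).re| ≤ ‖F σ - 1‖ := Complex.abs_re_le_norm _
    have h3 : (F σ - 1).re = (F σ).re - 1 := by simp
    rw [Complex.mem_slitPlane_iff]
    left
    rw [h3] at h2
    have := abs_lt.mp (lt_of_le_of_lt h2 h1)
    linarith [this.1]
  set g : ℂ → ℂ := fun σ => w * Complex.exp (Complex.log (F σ) / 2) with hg
  have hgne : ∀ σ ∈ Metric.ball τ r, g σ ≠ 0 := fun σ _ =>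
    mul_ne_zero hw0 (Complex.exp_ne_zero _)
  have hgcont : ContinuousOn g (Metric.ball τ r) := by
    intro σ hσ
    have hFat : ContinuousAt F σ := hFcont.continuousAt (hT.mem_nhds (hsubT hσ))
    have hlog : ContinuousAt Complex.log (F σ) := continuousAt_clog (hFslit σ hσ)
    exact (continuousAt_const.mul (((hlog.comp hFat).div_const 2).cexp)).continuousWithinAt
  have hgdiff : DifferentiableAt ℂ g τ := by
    have hFd : DifferentiableAt ℂ F τ := ((hdZ τ hτ).differentiableAt).div_const _
    have hmem : F τ ∈ Complex.slitPlane := by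
      rw [hFτ]; exact Complex.one_mem_slitPlane
    exact (differentiableAt_const w).mul (((hFd.clog hmem).div_const 2).cexp)
  have hgsq : ∀ σ ∈ Metric.ball τ r, g σ ^ 2 = deriv Z σ := by
    intro σ hσ
    have h1 : Complex.exp (Complex.log (F σ) / 2) ^ 2 = Complex.exp (Complex.log (F σ)) := by
      rw [sq, ← Complex.exp_add]
      ring_nf
    have h2 : Complex.exp (Complex.log (F σ)) = F σ := Complex.exp_log (hFne σ hσ)
    have hw2' : w ^ 2 ≠ 0 := pow_ne_zero 2 hw0
    calc g σ ^ 2 = w ^ 2 * Complex.exp (Complex.log (F σ) / 2) ^ 2 := by rw [hg]; ring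
      _ = w ^ 2 * F σ := by rw [h1, h2]
      _ = deriv Z σ := by rw [hF]; field_simp
  have hgτ : g τ = w := by
    rw [hg]
    simp [hFτ, Complex.log_one]
  -- q = s / g takes values ±1 on the ball, is continuous, equals 1 at τ
  set q : ℂ → ℂ := fun σ => s σ / g σ with hq
  have hq2 : ∀ σ ∈ Metric.ball τ r, q σ = 1 ∨ q σ = -1 := by
    intro σ hσ
    have h1 : q σ * q σ = 1 := by
      rw [hq]
      have : s σ ^ 2 = g σ ^ 2 := by rw [hssq σ (hsubT hσ), hgsq σ hσ]
      field_simp [hgne σ hσ]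
      linear_combination this
    exact mul_self_eq_one_iff.mp h1
  have hqcont : ContinuousOn q (Metric.ball τ r) :=
    (hs.mono hsubT).div hgcont (hgne)
  have hqτ : q τ = 1 := by
    rw [hq]
    simp only [hgτ]
    exact div_self hw0
  have hAopen : IsOpen (Metric.ball τ r ∩ q ⁻¹' Metric.ball (1:ℂ) 1) :=
    hqcont.isOpen_inter_preimage Metric.isOpen_ball Metric.isOpen_ball
  have hBopen : IsOpen (Metric.ball τ r ∩ q ⁻¹' Metric.ball (-1:ℂ) 1) :=
    hqcont.isOpen_inter_preimage Metric.isOpen_ball Metric.isOpen_ball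
  have hqone : ∀ σ ∈ Metric.ball τ r, q σ = 1 := by
    by_contra hcon
    push_neg at hcon
    obtain ⟨σ₀, hσ₀, hσ₀ne⟩ := hcon
    have hσ₀neg : q σ₀ = -1 := (hq2 σ₀ hσ₀).resolve_left hσ₀ne
    have hpre : IsPreconnected (Metric.ball τ r) := (convex_ball τ r).isPreconnected
    have hcover : Metric.ball τ r ⊆
        (Metric.ball τ r ∩ q ⁻¹' Metric.ball (1:ℂ) 1) ∪
        (Metric.ball τ r ∩ q ⁻¹' Metric.ball (-1:ℂ) 1) := by
      intro σ hσ
      rcases hq2 σ hσ with h | h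
      · left; exact ⟨hσ, by simp [h]⟩
      · right; exact ⟨hσ, by simp [h]⟩
    have hA : (Metric.ball τ r ∩ (Metric.ball τ r ∩ q ⁻¹' Metric.ball (1:ℂ) 1)).Nonempty :=
      ⟨τ, Metric.mem_ball_self hr0, Metric.mem_ball_self hr0, by simp [hqτ]⟩
    have hB : (Metric.ball τ r ∩ (Metric.ball τ r ∩ q ⁻¹' Metric.ball (-1:ℂ) 1)).Nonempty :=
      ⟨σ₀, hσ₀, hσ₀, by simp [hσ₀neg]⟩
    obtain ⟨x, _, ⟨_, hx1⟩, ⟨_, hx2⟩⟩ := hpre _ _ hAopen hBopen hcover hA hB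
    have d1 : dist (q x) 1 < 1 := hx1
    have d2 : dist (q x) (-1) < 1 := hx2
    have : dist (1:ℂ) (-1) ≤ dist (q x) 1 + dist (q x) (-1) :=
      dist_triangle_left _ _ _
    have h2 : dist (1:ℂ) (-1) = 2 := by
      simp [Complex.dist_eq]
      norm_num
    linarith
  have hsg : ∀ σ ∈ Metric.ball τ r, s σ = g σ := by
    intro σ hσ
    have := hqone σ hσ
    rw [hq] at this
    field_simp [hgne σ hσ] at this
    exact this
  -- replace s by g
  have hev : (fun σ => ψ (Z σ) * s σ) =ᶠ[nhds τ] (fun σ => ψ (Z σ) * g σ) := by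
    filter_upwards [Metric.ball_mem_nhds τ hr0] with σ hσ
    rw [hsg σ hσ]
  have hdzbar_eq : dzbar (fun σ => ψ (Z σ) * s σ) τ = dzbar (fun σ => ψ (Z σ) * g σ) τ := by
    unfold dzbar
    rw [hev.fderiv_eq]
  rw [hdzbar_eq]
  have hZτD : Z τ ∈ D := hZbij.mapsTo hτ
  have hψd : DifferentiableAt ℝ ψ (Z τ) :=
    (hψC.contDiffAt (hD.mem_nhds hZτD)).differentiableAt one_ne_zero
  have hψZdiff : DifferentiableAt ℝ (fun σ => ψ (Z σ)) τ :=
    DifferentiableAt.comp τ hψd (hZat.restrictScalars ℝ)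
  rw [dzbar_mul hψZdiff (hgdiff.restrictScalars ℝ), dzbar_of_holomorphic hgdiff,
    dzbar_comp_holomorphic hZat hψd, hψ (Z τ) hZτD, hgτ]
  have h1 : conj c = conj w ^ 2 := by rw [← hw2, map_pow]
  have h2 : ((‖c‖ : ℝ) : ℂ) = w * conj w := by
    rw [← hw2, norm_pow, Complex.sq_norm, Complex.mul_conj]
  have key : w * conj c = ((‖c‖ : ℝ) : ℂ) * conj w := by
    rw [h1, h2]; ring
  rw [map_mul]
  linear_combination (u (Z τ) * conj (ψ (Z τ))) * key
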